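/- arXiv:1509.02864 — 2 statements merged into one kernel-verified Lean document; each statement's English description precedes it below -/
import Mathlib

section
/- Let f : ℝ → ℂ be a continuous 2π-periodic function whose Fourier coefficients satisfy f̂(k) = 0 for all k < 0. Then the zeroth Fourier coefficient of e^f equals e^{f̂(0)}: (1/(2π)) ∫₀^{2π} e^{f(θ)} dθ = exp( (1/(2π)) ∫₀^{2π} f(θ) dθ ). -/
noncomputable section

/-- The `k`-th Fourier coefficient `f̂(k) = (1/2π) ∫₀^{2π} f(θ) e^{-ikθ} dθ` of a
(`2π`-periodic) function `f : ℝ → ℂ`. -/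
def fc (f : ℝ → ℂ) (k : ℤ) : ℂ :=
  (1 / (2 * (Real.pi : ℂ))) *
    ∫ θ in (0 : ℝ)..(2 * Real.pi), f θ * Complex.exp (-(Complex.I * (k : ℂ) * (θ : ℂ)))

open MeasureTheory Complex Filter Function Set AddCircle
open scoped Real ComplexConjugate

namespace Aux12

instance : Fact (0 < (2 * Real.pi : ℝ)) := ⟨by positivity⟩

local notation "𝕋" => AddCircle (2 * Real.pi)
local notation "μ" => @haarAddCircle (2 * Real.pi) _

lemma coeff_zero (g : 𝕋 → ℂ) : fourierCoeff g 0 = ∫ t, g t ∂μ := by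
  simp [fourierCoeff]

lemma coeff_conj (g : 𝕋 → ℂ) (k : ℤ) :
    fourierCoeff (fun t => conj (g t)) k = conj (fourierCoeff g (-k)) := by
  rw [fourierCoeff, fourierCoeff, ← integral_conj]
  congr 1
  ext t
  rw [smul_eq_mul, smul_eq_mul, map_mul, neg_neg, ← fourier_neg]

lemma parseval_mul (G H : C(𝕋, ℂ)) :
    HasSum (fun k : ℤ => fourierCoeff (⇑G) (-k) * fourierCoeff (⇑H) k)
      (∫ t, G t * H t ∂μ) := by
  have key := fourierBasis.hasSum_inner_mul_inner
    (ContinuousMap.toLp 2 μ ℂ (star G)) (ContinuousMap.toLp 2 μ ℂ H)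
  have h1 : ∀ k : ℤ, (inner ℂ (ContinuousMap.toLp 2 μ ℂ (star G)) (fourierBasis k) : ℂ)
      = fourierCoeff (⇑G) (-k) := by
    intro k
    rw [← inner_conj_symm, ← fourierBasis.repr_apply_apply, fourierBasis_repr,
      fourierCoeff_toLp]
    have : ⇑(star G) = fun t => conj (G t) := rfl
    rw [this, coeff_conj, RingHomInvPair.comp_apply_eq]  -- conj conj
  have h2 : ∀ k : ℤ, (inner ℂ (fourierBasis (T := 2 * Real.pi) k) (ContinuousMap.toLp 2 μ ℂ H) : ℂ)
      = fourierCoeff (⇑H) k := by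
    intro k
    rw [← fourierBasis.repr_apply_apply, fourierBasis_repr, fourierCoeff_toLp]
  have h3 : (inner ℂ (ContinuousMap.toLp 2 μ ℂ (star G)) (ContinuousMap.toLp 2 μ ℂ H) : ℂ)
      = ∫ t, G t * H t ∂μ := by
    rw [MeasureTheory.L2.inner_def]
    apply integral_congr_ae
    filter_upwards [ContinuousMap.coeFn_toLp (p := 2) (𝕜 := ℂ) μ (star G),
      ContinuousMap.coeFn_toLp (p := 2) (𝕜 := ℂ) μ H] with t h1 h2
    rw [h1, h2, RCLike.inner_apply]
    simp [mul_comm]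
  rw [h3] at key
  have heq : (fun k : ℤ => (inner ℂ (ContinuousMap.toLp 2 μ ℂ (star G)) (fourierBasis k) : ℂ) *
      inner ℂ (fourierBasis (T := 2 * Real.pi) k) (ContinuousMap.toLp 2 μ ℂ H))
      = fun k : ℤ => fourierCoeff (⇑G) (-k) * fourierCoeff (⇑H) k :=
    funext fun k => by rw [h1 k, h2 k]
  rwa [heq] at key

lemma coeff_mul_shift (G H : C(𝕋, ℂ)) (m : ℤ) :
    HasSum (fun k : ℤ => fourierCoeff (⇑G) (-k) * fourierCoeff (⇑H) (k + m))
      (fourierCoeff (fun t => G t * H t) m) := by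
  have key := parseval_mul G ((fourier (-m) : C(𝕋, ℂ)) * H)
  have h1 : ∀ k : ℤ, fourierCoeff (⇑((fourier (-m) : C(𝕋, ℂ)) * H)) k = fourierCoeff (⇑H) (k + m) := by
    intro k
    rw [fourierCoeff, fourierCoeff]
    congr 1
    ext t
    rw [ContinuousMap.mul_apply, smul_eq_mul, smul_eq_mul, ← mul_assoc, ← fourier_add]
    ring_nf
  have h2 : (∫ t, G t * ((fourier (-m) : C(𝕋, ℂ)) * H) t ∂μ) = fourierCoeff (fun t => G t * H t) m := by
    rw [fourierCoeff]
    congr 1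
    ext t
    rw [ContinuousMap.mul_apply, smul_eq_mul]
    ring
  simp_rw [h1, h2] at key
  exact key

lemma coeff_one (k : ℤ) : fourierCoeff (fun _ : 𝕋 => (1 : ℂ)) k = if k = 0 then 1 else 0 := by
  have h1 : (fun _ : 𝕋 => (1 : ℂ)) = ⇑(fourier 0) := by
    ext t; exact (fourier_zero).symm
  have h2 : fourierBasis (T := 2 * Real.pi) 0 = ContinuousMap.toLp 2 μ ℂ (fourier 0) :=
    congrFun coe_fourierBasis 0
  rw [h1, ← fourierCoeff_toLp, ← fourierBasis_repr, ← h2, fourierBasis.repr_self,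
    lp.single_apply]
  split <;> simp_all

lemma coeff_mul_neg (G H : C(𝕋, ℂ)) (hG : ∀ k < 0, fourierCoeff (⇑G) k = 0)
    (hH : ∀ k < 0, fourierCoeff (⇑H) k = 0) {m : ℤ} (hm : m < 0) :
    fourierCoeff (fun t => G t * H t) m = 0 := by
  have key := coeff_mul_shift G H m
  have hz : (fun k : ℤ => fourierCoeff (⇑G) (-k) * fourierCoeff (⇑H) (k + m))
      = fun _ => (0 : ℂ) := by
    funext k
    rcases lt_or_ge 0 k with h | h
    · rw [hG (-k) (by omega), zero_mul]
    · rw [hH (k + m) (by omega), mul_zero]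
  rw [hz] at key
  exact key.unique hasSum_zero

lemma coeff_mul_zero (G H : C(𝕋, ℂ)) (hG : ∀ k < 0, fourierCoeff (⇑G) k = 0)
    (hH : ∀ k < 0, fourierCoeff (⇑H) k = 0) :
    fourierCoeff (fun t => G t * H t) 0 = fourierCoeff (⇑G) 0 * fourierCoeff (⇑H) 0 := by
  have key := coeff_mul_shift G H 0
  have h0 := hasSum_single (f := fun k : ℤ => fourierCoeff (⇑G) (-k) * fourierCoeff (⇑H) (k + 0))
    0 (fun k hk => by
      beta_reduce
      rcases lt_or_ge 0 k with h | h
      · rw [hG (-k) (by omega), zero_mul]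
      · rw [hH (k + 0) (by omega), mul_zero])
  simpa using key.unique h0

lemma coeff_pow (G : C(𝕋, ℂ)) (hG : ∀ k < 0, fourierCoeff (⇑G) k = 0) (n : ℕ) :
    (∀ k < 0, fourierCoeff (⇑(G ^ n)) k = 0) ∧
      fourierCoeff (⇑(G ^ n)) 0 = (fourierCoeff (⇑G) 0) ^ n := by
  induction n with
  | zero =>
    have h : ⇑(G ^ 0) = fun _ : 𝕋 => (1 : ℂ) := by ext t; simp
    rw [h]
    constructor
    · intro k hk; rw [coeff_one]; simp [hk.ne]
    · rw [coeff_one]; simp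
  | succ n ih =>
    have h : ⇑(G ^ (n + 1)) = fun t => G t * (G ^ n) t := by
      ext t; rw [pow_succ]; simp [mul_comm]
    rw [h]
    constructor
    · intro k hk; exact coeff_mul_neg G (G ^ n) hG ih.1 hk
    · rw [coeff_mul_zero G (G ^ n) hG ih.1, ih.2, pow_succ, mul_comm]

lemma integral_exp (G : C(𝕋, ℂ)) (hG : ∀ k < 0, fourierCoeff (⇑G) k = 0) :
    ∫ t, Complex.exp (G t) ∂μ = Complex.exp (fourierCoeff (⇑G) 0) := by
  have hexp : ∀ z : ℂ, Complex.exp z = ∑' n : ℕ, z ^ n / n.factorial := by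
    intro z
    rw [Complex.exp_eq_exp_ℂ, NormedSpace.exp_eq_tsum_div]
  have hmeas : ∀ n : ℕ, AEStronglyMeasurable (fun t : 𝕋 => (G t) ^ n / n.factorial) μ :=
    fun n => ((G.continuous.pow n).div_const _).aestronglyMeasurable
  have hbound : ∀ n : ℕ, ∫⁻ t, ‖(G t) ^ n / (n.factorial : ℂ)‖₊ ∂μ
      ≤ ENNReal.ofReal (‖G‖ ^ n / n.factorial) := by
    intro n
    calc ∫⁻ t, ‖(G t) ^ n / (n.factorial : ℂ)‖₊ ∂μ
        ≤ ∫⁻ _, ENNReal.ofReal (‖G‖ ^ n / n.factorial) ∂μ := by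
          apply lintegral_mono
          intro t
          show (‖G t ^ n / (n.factorial : ℂ)‖₊ : ENNReal) ≤ ENNReal.ofReal (‖G‖ ^ n / n.factorial)
          rw [← enorm_eq_nnnorm, ← ofReal_norm]
          apply ENNReal.ofReal_le_ofReal
          rw [norm_div, norm_pow, Complex.norm_natCast]
          gcongr
          exact G.norm_coe_le_norm t
      _ = ENNReal.ofReal (‖G‖ ^ n / n.factorial) := by
          rw [lintegral_const, measure_univ, mul_one]
  have hsum : ∑' n : ℕ, ∫⁻ t, ‖(G t) ^ n / (n.factorial : ℂ)‖₊ ∂μ ≠ ⊤ := by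
    apply ne_top_of_le_ne_top _ (ENNReal.tsum_le_tsum hbound)
    rw [← ENNReal.ofReal_tsum_of_nonneg (fun n => by positivity)
      (Real.summable_pow_div_factorial ‖G‖)]
    exact ENNReal.ofReal_ne_top
  calc ∫ t, Complex.exp (G t) ∂μ
      = ∫ t, ∑' n : ℕ, (G t) ^ n / n.factorial ∂μ := by simp_rw [hexp]
    _ = ∑' n : ℕ, ∫ t, (G t) ^ n / n.factorial ∂μ := integral_tsum hmeas hsum
    _ = ∑' n : ℕ, (fourierCoeff (⇑G) 0) ^ n / n.factorial := by
        congr 1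
        funext n
        rw [← (coeff_pow G hG n).2, coeff_zero]
        have h : ⇑(G ^ n) = fun t : 𝕋 => (G t) ^ n := by ext t; simp
        rw [h, integral_div]
    _ = Complex.exp (fourierCoeff (⇑G) 0) := (hexp _).symm

lemma bridge (g : ℝ → ℂ) (hg : Function.Periodic g (2 * Real.pi)) (k : ℤ) :
    fourierCoeff (hg.lift) k
      = (1 / (2 * (Real.pi : ℂ))) *
          ∫ θ in (0 : ℝ)..(2 * Real.pi), g θ * Complex.exp (-(Complex.I * (k : ℂ) * (θ : ℂ))) := by
  have hπ : (Real.pi : ℂ) ≠ 0 := Complex.ofReal_ne_zero.mpr Real.pi_ne_zero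
  rw [fourierCoeff_eq_intervalIntegral _ k 0, zero_add]
  have hpt : ∀ θ : ℝ, (fourier (-k) (θ : 𝕋)) • hg.lift (θ : 𝕋)
      = g θ * Complex.exp (-(Complex.I * (k : ℂ) * (θ : ℂ))) := by
    intro θ
    rw [Function.Periodic.lift_coe, fourier_coe_apply, smul_eq_mul, mul_comm]
    congr 2
    push_cast
    field_simp
  simp_rw [hpt]
  rw [Complex.real_smul]
  push_cast
  ring

lemma lift_continuous (g : ℝ → ℂ) (hgc : Continuous g) (hg : Function.Periodic g (2 * Real.pi)) :
    Continuous hg.lift := by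
  unfold Function.Periodic.lift
  exact hgc.quotient_liftOn' _

end Aux12

theorem stmt_12 (f : ℝ → ℂ) (hf : Continuous f)
    (hper : ∀ θ, f (θ + 2 * Real.pi) = f θ)
    (hcoef : ∀ k : ℤ, k < 0 → fc f k = 0) :
    (1 / (2 * (Real.pi : ℂ))) * ∫ θ in (0 : ℝ)..(2 * Real.pi), Complex.exp (f θ)
      = Complex.exp ((1 / (2 * (Real.pi : ℂ))) * ∫ θ in (0 : ℝ)..(2 * Real.pi), f θ) := by
  classical
  open Aux12 in
  have hperf : Function.Periodic f (2 * Real.pi) := hper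
  have hpere : Function.Periodic (fun θ => Complex.exp (f θ)) (2 * Real.pi) := by
    intro θ; simp [hper θ]
  set G : C(AddCircle (2 * Real.pi), ℂ) := ⟨hperf.lift, Aux12.lift_continuous f hf hperf⟩ with hGdef
  -- fc f k = fourierCoeff G k
  have hfc : ∀ k : ℤ, fourierCoeff (⇑G) k = fc f k := by
    intro k
    rw [hGdef]
    exact Aux12.bridge f hperf k
  have hGcoef : ∀ k < 0, fourierCoeff (⇑G) k = 0 := fun k hk => by
    rw [hfc k]; exact hcoef k hk
  have hlift : hpere.lift = fun t => Complex.exp (G t) := by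
    funext x
    induction x using QuotientAddGroup.induction_on with
    | H θ => rw [hGdef]; exact (hpere.lift_coe θ).trans (by rw [ContinuousMap.coe_mk, hperf.lift_coe θ])
  -- LHS
  have h1 : (1 / (2 * (Real.pi : ℂ))) * ∫ θ in (0 : ℝ)..(2 * Real.pi), Complex.exp (f θ)
      = fourierCoeff (hpere.lift) 0 := by
    rw [Aux12.bridge _ hpere 0]
    congr 1
    apply intervalIntegral.integral_congr
    intro θ _
    simp
  have h2 : (1 / (2 * (Real.pi : ℂ))) * (∫ θ in (0 : ℝ)..(2 * Real.pi), f θ)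
      = fourierCoeff (⇑G) 0 := by
    rw [hfc 0, fc]
    congr 1
    apply intervalIntegral.integral_congr
    intro θ _
    simp
  rw [h1, h2, hlift, Aux12.coeff_zero, Aux12.integral_exp G hGcoef, Aux12.coeff_zero]

end
end

section
/- Let f : ℝ → ℂ be a continuous 2π-periodic function whose Fourier coefficients satisfy f̂(k) = 0 for all k ≥ 0. Then the zeroth Fourier coefficient of e^f equals 1: (1/(2π)) ∫₀^{2π} e^{f(θ)} dθ = 1. -/
noncomputable section

namespace Stmt13Aux

open MeasureTheory Complex AddCircle
open scoped Real ComplexConjugate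

local instance fact2pi : Fact (0 < 2 * Real.pi) := ⟨by positivity⟩

abbrev T : ℝ := 2 * Real.pi

theorem fourierCoeff_conj (h : AddCircle T → ℂ) (j : ℤ) :
    fourierCoeff (fun t => conj (h t)) j = conj (fourierCoeff h (-j)) := by
  rw [fourierCoeff, fourierCoeff, ← integral_conj]
  congr 1
  ext t
  simp only [smul_eq_mul, map_mul, neg_neg, RingHom.coe_coe, starRingEnd_self_apply]
  rw [← fourier_neg]

theorem fourierCoeff_fourier_mul (h : AddCircle T → ℂ) (m j : ℤ) :
    fourierCoeff (fun t => fourier m t * h t) j = fourierCoeff h (j - m) := by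
  rw [fourierCoeff, fourierCoeff]
  congr 1
  ext t
  simp only [smul_eq_mul, ← mul_assoc, ← fourier_add]
  congr 2
  ring_nf

theorem inner_fourierBasis (W : C(AddCircle T, ℂ)) (j : ℤ) :
    (inner ℂ (fourierBasis (T := T) j) (ContinuousMap.toLp (E := ℂ) 2 haarAddCircle ℂ W) : ℂ)
      = fourierCoeff ⇑W j := by
  rw [← HilbertBasis.repr_apply_apply, fourierBasis_repr, fourierCoeff_toLp]

/-- Parseval's identity for continuous functions on the circle. -/
theorem parseval (U V : C(AddCircle T, ℂ)) :
    (∫ t, conj (U t) * V t ∂(@haarAddCircle T _))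
      = ∑' j : ℤ, conj (fourierCoeff ⇑U j) * fourierCoeff ⇑V j := by
  have h1 : (inner ℂ (ContinuousMap.toLp (E := ℂ) 2 haarAddCircle ℂ U)
        (ContinuousMap.toLp (E := ℂ) 2 haarAddCircle ℂ V) : ℂ)
      = ∫ t, conj (U t) * V t ∂(@haarAddCircle T _) := by
    rw [MeasureTheory.L2.inner_def]
    apply integral_congr_ae
    filter_upwards [ContinuousMap.coeFn_toLp (p := 2) haarAddCircle (𝕜 := ℂ) U,
      ContinuousMap.coeFn_toLp (p := 2) haarAddCircle (𝕜 := ℂ) V] with t h1 h2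
    rw [RCLike.inner_apply, h1, h2, mul_comm]
  rw [← h1, ← (fourierBasis (T := T)).tsum_inner_mul_inner]
  congr 1
  ext j
  congr 1
  · rw [← inner_conj_symm]
    exact congrArg _ (inner_fourierBasis U j)
  · exact inner_fourierBasis V j

/-- If `F` and `G` both have vanishing Fourier coefficients for `k ≥ 0`, so does `F * G`. -/
theorem mul_vanish (F G : C(AddCircle T, ℂ))
    (hF : ∀ k : ℤ, 0 ≤ k → fourierCoeff ⇑F k = 0)
    (hG : ∀ k : ℤ, 0 ≤ k → fourierCoeff ⇑G k = 0)
    (k : ℤ) (hk : 0 ≤ k) : fourierCoeff ⇑(F * G) k = 0 := by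
  set e : C(AddCircle T, ℂ) := fourier (-k)
  set U : C(AddCircle T, ℂ) := star (e * F)
  have hU : ∀ t, conj (U t) = e t * F t := by
    intro t
    simp [U, e, starRingEnd_self_apply]
  have h1 : fourierCoeff ⇑(F * G) k = ∫ t, conj (U t) * G t ∂(@haarAddCircle T _) := by
    rw [fourierCoeff]
    congr 1
    ext t
    rw [hU]
    simp [e, mul_assoc]
  have hUc : ∀ j : ℤ, fourierCoeff ⇑U j = conj (fourierCoeff ⇑F (k - j)) := by
    intro j
    have : ⇑U = fun t => conj ((e * F : C(AddCircle T, ℂ)) t) := by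
      ext t; simp [U, starRingEnd_self_apply]
    rw [this, fourierCoeff_conj]
    have : ⇑(e * F) = fun t => fourier (-k) t * F t := by ext t; simp [e]
    rw [this, fourierCoeff_fourier_mul]
    congr 2
    ring
  rw [h1, parseval]
  rw [show (fun j : ℤ => conj (fourierCoeff ⇑U j) * fourierCoeff ⇑G j) = fun _ => (0 : ℂ)
      from funext fun j => ?_, tsum_zero]
  rcases le_or_gt 0 j with hj | hj
  · rw [hG j hj, mul_zero]
  · simp [hUc j, hF (k - j) (by omega)]

/-- Mean value of `exp ∘ F` is `1` when all coefficients of positive powers of `F` vanish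
at frequency `0`. -/
theorem exp_integral (F : C(AddCircle T, ℂ))
    (hFn : ∀ n : ℕ, 1 ≤ n → fourierCoeff ⇑(F ^ n) 0 = 0) :
    (∫ t, Complex.exp (F t) ∂(@haarAddCircle T _)) = 1 := by
  have hexp : ∀ t : AddCircle T, Complex.exp (F t) = ∑' n : ℕ, F t ^ n / n.factorial := by
    intro t
    rw [Complex.exp_eq_exp_ℂ, NormedSpace.exp_eq_tsum_div]
  have hint : ∀ n : ℕ, Integrable (fun t : AddCircle T => F t ^ n / n.factorial)
      (@haarAddCircle T _) := fun n =>
    ((F.continuous.pow n).div_const _).integrable_of_hasCompactSupport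
      (HasCompactSupport.of_compactSpace _)
  have hsum : Summable fun n : ℕ => ∫ t, ‖F t ^ n / (n.factorial : ℂ)‖ ∂(@haarAddCircle T _) := by
    apply Summable.of_nonneg_of_le (fun n => integral_nonneg fun t => norm_nonneg _)
      (fun n => ?_) (Real.summable_pow_div_factorial ‖F‖)
    calc ∫ t, ‖F t ^ n / (n.factorial : ℂ)‖ ∂(@haarAddCircle T _)
        ≤ ∫ _t, ‖F‖ ^ n / n.factorial ∂(@haarAddCircle T _) := by
          apply integral_mono ((hint n).norm) (integrable_const _)
          intro t
          simp only [norm_div, norm_pow, Complex.norm_natCast]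
          gcongr
          exact F.norm_coe_le_norm t
      _ = ‖F‖ ^ n / n.factorial := by
          rw [integral_const, probReal_univ, one_smul]
  have key : (∫ t, Complex.exp (F t) ∂(@haarAddCircle T _))
      = ∑' n : ℕ, ∫ t, F t ^ n / n.factorial ∂(@haarAddCircle T _) := by
    rw [show (fun t : AddCircle T => Complex.exp (F t)) = fun t => ∑' n : ℕ, F t ^ n / n.factorial
      from funext hexp]
    exact (integral_tsum_of_summable_integral_norm hint hsum).symm
  rw [key]
  have hterm : ∀ n : ℕ, (∫ t, F t ^ n / n.factorial ∂(@haarAddCircle T _))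
      = (fourierCoeff ⇑(F ^ n) 0) / n.factorial := by
    intro n
    rw [fourierCoeff]
    simp only [neg_zero, fourier_zero, one_smul, ContinuousMap.coe_pow, Pi.pow_apply]
    rw [integral_div]
  rw [tsum_eq_single 0 ?_]
  · simp [hterm 0]
  · intro n hn
    rw [hterm n, hFn n (Nat.one_le_iff_ne_zero.2 hn), zero_div]

theorem smul_helper (z : ℂ) : (1 / T : ℝ) • z = (1 / (2 * (Real.pi : ℂ))) * z := by
  rw [real_smul]
  norm_num

theorem fourier_helper (k : ℤ) (x : ℝ) :
    (fourier (-k) (x : AddCircle T) : ℂ) = Complex.exp (-(Complex.I * (k : ℂ) * (x : ℂ))) := by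
  rw [fourier_coe_apply]
  congr 1
  have hπ : (Real.pi : ℂ) ≠ 0 := by
    simpa using Real.pi_ne_zero
  field_simp
  push_cast
  ring

theorem fc_eq (f : ℝ → ℂ) (hper : Function.Periodic f T) (k : ℤ) :
    fc f k = fourierCoeff hper.lift k := by
  rw [fourierCoeff_eq_intervalIntegral _ k 0, zero_add, fc, ← smul_helper]
  congr 1
  apply intervalIntegral.integral_congr
  intro x _
  simp only [smul_eq_mul, Function.Periodic.lift_coe, fourier_helper, mul_comm]

end Stmt13Aux

theorem stmt_13 (f : ℝ → ℂ) (hf : Continuous f)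
    (hper : ∀ θ, f (θ + 2 * Real.pi) = f θ)
    (hcoef : ∀ k : ℤ, 0 ≤ k → fc f k = 0) :
    (1 / (2 * (Real.pi : ℂ))) * ∫ θ in (0 : ℝ)..(2 * Real.pi), Complex.exp (f θ)
      = 1 := by
  open MeasureTheory Complex AddCircle Stmt13Aux in
  haveI : Fact (0 < 2 * Real.pi) := ⟨by positivity⟩
  have hper' : Function.Periodic f Stmt13Aux.T := hper
  set F : C(AddCircle Stmt13Aux.T, ℂ) :=
    ⟨hper'.lift, continuous_coinduced_dom.mpr hf⟩ with hFdef
  have hF : ∀ k : ℤ, 0 ≤ k → fourierCoeff ⇑F k = 0 := by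
    intro k hk
    have h := hcoef k hk
    rwa [Stmt13Aux.fc_eq f hper' k] at h
  have hpow : ∀ n : ℕ, ∀ k : ℤ, 0 ≤ k → fourierCoeff ⇑(F ^ (n + 1)) k = 0 := by
    intro n
    induction n with
    | zero => simpa using hF
    | succ m ih =>
      intro k hk
      have hFp : F ^ (m + 1 + 1) = F ^ (m + 1) * F := pow_succ F (m + 1)
      rw [hFp]
      exact Stmt13Aux.mul_vanish _ _ ih hF k hk
  have hFn : ∀ n : ℕ, 1 ≤ n → fourierCoeff ⇑(F ^ n) 0 = 0 := by
    intro n hn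
    obtain ⟨m, rfl⟩ : ∃ m, n = m + 1 := ⟨n - 1, (Nat.succ_pred_eq_of_pos hn).symm⟩
    exact hpow m 0 le_rfl
  have hexp1 : (∫ t, Complex.exp (F t) ∂(haarAddCircle (T := Stmt13Aux.T))) = 1 :=
    Stmt13Aux.exp_integral F hFn
  have hbridge : fourierCoeff (fun t : AddCircle Stmt13Aux.T => Complex.exp (F t)) 0
      = (1 / (2 * (Real.pi : ℂ))) * ∫ θ in (0 : ℝ)..(2 * Real.pi), Complex.exp (f θ) := by
    rw [fourierCoeff_eq_intervalIntegral _ 0 0, zero_add, ← Stmt13Aux.smul_helper]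
    congr 1
    apply intervalIntegral.integral_congr
    intro x _
    simp only [neg_zero, fourier_zero, one_smul]
    congr 1
  have hco : fourierCoeff (fun t : AddCircle Stmt13Aux.T => Complex.exp (F t)) 0 = 1 := by
    rw [fourierCoeff]
    simpa using hexp1
  rw [← hbridge, hco]

end
end
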